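/- The Sup-MO value for m = 2 equals 2: the matrix M(n,2) - 2N(n,2) (the Moler matrix) is positive semi-definite for all n, but for any α > 2 there exists n such that M(n,2) - α N(n,2) is not positive semi-definite. -/

import Mathlib

open Matrix Finset

noncomputable def Mmat (n : ℕ) : Matrix (Fin n) (Fin n) ℝ :=
  fun i j => if i = j then ((i : ℕ) + 1 : ℝ) else ((min (i : ℕ) (j : ℕ) : ℝ) + 1)

noncomputable def Nmat (n : ℕ) : Matrix (Fin n) (Fin n) ℝ :=
  fun i j => if i = j then 0 else 1

noncomputable def Umat (n : ℕ) : Matrix (Fin n) (Fin n) ℝ :=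
  fun i j => if (i : ℕ) = (j : ℕ) then 1 else if (i : ℕ) < (j : ℕ) then -1 else 0

lemma sum_key (n i j : ℕ) (hi : i < n) (hij : i ≤ j) :
    ∑ k ∈ range n, ((if k = i then (1:ℝ) else if k < i then -1 else 0) *
      (if k = j then (1:ℝ) else if k < j then -1 else 0)) =
    if i = j then (i:ℝ) + 1 else (i:ℝ) - 1 := by
  have hsum : ∀ k ∈ range n,
      ((if k = i then (1:ℝ) else if k < i then -1 else 0) *
      (if k = j then (1:ℝ) else if k < j then -1 else 0)) =
      (if k = i then (if i = j then (1:ℝ) else -1) else 0) + (if k < i then 1 else 0) := by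
    intro k _
    rcases lt_trichotomy k i with h | h | h
    · have h1 : k ≠ i := ne_of_lt h
      have h2 : k < j := lt_of_lt_of_le h hij
      simp [h1, h, h2, ne_of_lt h2]
    · subst h
      rcases eq_or_lt_of_le hij with h3 | h3
      · simp [h3]
      · simp [ne_of_lt h3, h3]
    · have h1 : k ≠ i := (ne_of_lt h).symm
      simp [h1, not_lt_of_gt h]
  rw [Finset.sum_congr rfl hsum, Finset.sum_add_distrib]
  rw [Finset.sum_ite_eq' (range n) i fun _ => if i = j then (1:ℝ) else -1]
  have hfil : (range n).filter (fun k => k < i) = range i := by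
    ext k; simp only [Finset.mem_filter, Finset.mem_range]; omega
  rw [Finset.sum_boole, hfil, Finset.card_range]
  simp only [Finset.mem_range.mpr hi, if_pos]
  split_ifs <;> ring

lemma factor (n : ℕ) : Mmat n - (2:ℝ) • Nmat n = (Umat n)ᵀ * Umat n := by
  ext i j
  simp only [Matrix.sub_apply, Matrix.smul_apply, Matrix.mul_apply, Matrix.transpose_apply,
    Mmat, Nmat, Umat, smul_eq_mul]
  rw [Fin.sum_univ_eq_sum_range (fun k => (if k = (i:ℕ) then (1:ℝ) else if k < (i:ℕ) then -1 else 0) *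
    (if k = (j:ℕ) then (1:ℝ) else if k < (j:ℕ) then -1 else 0))]
  rcases le_total (i:ℕ) (j:ℕ) with h | h
  · rw [sum_key n i j i.isLt h,
      min_eq_left (by exact_mod_cast h : ((i:ℕ):ℝ) ≤ ((j:ℕ):ℝ))]
    simp only [Fin.ext_iff]
    split_ifs <;> push_cast <;> ring
  · rw [Finset.sum_congr rfl (fun k _ => mul_comm
      (if k = (i:ℕ) then (1:ℝ) else if k < (i:ℕ) then -1 else 0)
      (if k = (j:ℕ) then (1:ℝ) else if k < (j:ℕ) then -1 else 0)),
      sum_key n j i j.isLt h,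
      min_eq_right (by exact_mod_cast h : ((j:ℕ):ℝ) ≤ ((i:ℕ):ℝ))]
    simp only [Fin.ext_iff]
    rcases eq_or_ne (i:ℕ) (j:ℕ) with he | he
    · simp [he]
    · have he' : ((i:ℕ):ℝ) = ((j:ℕ):ℝ) ↔ False := by
        simp [he]
      simp only [he, he', if_false]
      rw [if_neg (Ne.symm he)]
      ring
      
lemma geo (b : ℝ) (hb : b ≠ 1) : ∀ n a : ℕ, a ≤ n →
    ∑ j ∈ Ico a n, b^(n-1-j) = (b^(n-a) - 1)/(b-1) := by
  intro n
  induction n with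
  | zero => intro a ha; interval_cases a; simp
  | succ n ih =>
    intro a ha
    rcases eq_or_lt_of_le ha with h | h
    · subst h; simp
    · have ha' : a ≤ n := by omega
      rw [Finset.sum_Ico_succ_top ha']
      have e1 : ∀ j ∈ Ico a n, (b:ℝ)^(n+1-1-j) = b * b^(n-1-j) := by
        intro j hj
        rw [Finset.mem_Ico] at hj
        rw [← pow_succ']
        congr 1
        omega
      rw [Finset.sum_congr rfl e1, ← Finset.mul_sum, ih a ha']
      have h0 : n + 1 - 1 - n = 0 := by omega
      have h2 : n + 1 - a = (n - a) + 1 := by omega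
      rw [h0, h2, pow_succ']
      have hb1 : b - 1 ≠ 0 := sub_ne_zero.mpr hb
      field_simp
      ring

lemma Umul (n : ℕ) (i : Fin n) :
    ((Umat n).mulVec (fun j : Fin n => (2:ℝ)^(n-1-(j:ℕ)))) i = 1 := by
  simp only [Matrix.mulVec, dotProduct, Umat]
  rw [Fin.sum_univ_eq_sum_range (fun k =>
    (if (i:ℕ) = k then (1:ℝ) else if (i:ℕ) < k then -1 else 0) * 2^(n-1-k))]
  have hsum : ∀ k ∈ range n,
      (if (i:ℕ) = k then (1:ℝ) else if (i:ℕ) < k then -1 else 0) * 2^(n-1-k)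
      = (if k = (i:ℕ) then (2:ℝ)^(n-1-k) else 0) + (if (i:ℕ) < k then -(2:ℝ)^(n-1-k) else 0) := by
    intro k _
    rcases lt_trichotomy (i:ℕ) k with h | h | h
    · have h1 : (i:ℕ) ≠ k := ne_of_lt h
      have h2 : k ≠ (i:ℕ) := ne_of_gt h
      simp [h1, h2, h]
    · simp [h, lt_irrefl]
    · have h1 : (i:ℕ) ≠ k := ne_of_gt h
      have h2 : k ≠ (i:ℕ) := ne_of_lt h
      simp [h1, h2, not_lt_of_gt h]
  rw [Finset.sum_congr rfl hsum, Finset.sum_add_distrib,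
    Finset.sum_ite_eq' (range n) (i:ℕ) (fun k => (2:ℝ)^(n-1-k))]
  have hfil : (range n).filter (fun k => (i:ℕ) < k) = Ico ((i:ℕ)+1) n := by
    ext k; simp only [Finset.mem_filter, Finset.mem_range, Finset.mem_Ico]; omega
  rw [Finset.sum_ite, Finset.sum_const_zero, add_zero, hfil]
  have hneg : ∑ k ∈ Ico ((i:ℕ)+1) n, -(2:ℝ)^(n-1-k)
      = -((2:ℝ)^(n-((i:ℕ)+1)) - 1)/(2-1) := by
    rw [Finset.sum_neg_distrib, geo 2 (by norm_num) n ((i:ℕ)+1) i.isLt]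
    ring
  rw [hneg]
  simp only [Finset.mem_range.mpr i.isLt, if_pos]
  have : n - ((i:ℕ)+1) = n - 1 - (i:ℕ) := by omega
  rw [this]
  ring

lemma quad (n : ℕ) (α : ℝ) :
    (fun i : Fin n => (2:ℝ)^(n-1-(i:ℕ))) ⬝ᵥ
      (Mmat n - α • Nmat n).mulVec (fun i : Fin n => (2:ℝ)^(n-1-(i:ℕ)))
    = n + (2-α) * (((2:ℝ)^n - 1)^2 - ((4:ℝ)^n - 1)/3) := by
  set x : Fin n → ℝ := fun i : Fin n => (2:ℝ)^(n-1-(i:ℕ)) with hx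
  have hdec : Mmat n - α • Nmat n = (Mmat n - (2:ℝ) • Nmat n) + (2 - α) • Nmat n := by
    module
  have hS1 : ∑ i : Fin n, x i = (2:ℝ)^n - 1 := by
    rw [hx, Fin.sum_univ_eq_sum_range (fun k => (2:ℝ)^(n-1-k)), Finset.range_eq_Ico,
      geo 2 (by norm_num) n 0 (Nat.zero_le n)]
    norm_num
  have hS2 : ∑ i : Fin n, x i * x i = ((4:ℝ)^n - 1)/3 := by
    have he : ∀ i ∈ (univ : Finset (Fin n)), x i * x i = (4:ℝ)^(n-1-(i:ℕ)) := by
      intro i _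
      rw [hx]
      rw [← mul_pow]
      norm_num
    rw [Finset.sum_congr rfl he, Fin.sum_univ_eq_sum_range (fun k => (4:ℝ)^(n-1-k)),
      Finset.range_eq_Ico, geo 4 (by norm_num) n 0 (Nat.zero_le n)]
    norm_num
  have h1 : x ⬝ᵥ (Mmat n - (2:ℝ) • Nmat n).mulVec x = n := by
    rw [factor, ← Matrix.mulVec_mulVec, Matrix.dotProduct_mulVec, Matrix.vecMul_transpose]
    have hU : (Umat n).mulVec x = fun _ => 1 := funext (Umul n)
    rw [hU]
    simp [dotProduct]
  have h2 : x ⬝ᵥ (Nmat n).mulVec x = ((2:ℝ)^n - 1)^2 - ((4:ℝ)^n-1)/3 := by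
    have hmv : ∀ i, (Nmat n).mulVec x i = ((2:ℝ)^n - 1) - x i := by
      intro i
      simp only [Matrix.mulVec, dotProduct, Nmat]
      have he : ∀ j ∈ (univ : Finset (Fin n)),
          (if i = j then (0:ℝ) else 1) * x j = x j - (if i = j then x j else 0) := by
        intro j _
        split_ifs <;> ring
      rw [Finset.sum_congr rfl he, Finset.sum_sub_distrib,
        Finset.sum_ite_eq (univ : Finset (Fin n)) i x, hS1]
      simp
    simp only [dotProduct]
    rw [Finset.sum_congr rfl (fun i _ => by rw [hmv i])]
    have he : ∀ i ∈ (univ : Finset (Fin n)),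
        x i * (((2:ℝ)^n - 1) - x i) = x i * ((2:ℝ)^n - 1) - x i * x i := by
      intro i _; ring
    rw [Finset.sum_congr rfl he, Finset.sum_sub_distrib, ← Finset.sum_mul, hS1, hS2]
    ring
  rw [hdec, Matrix.add_mulVec, dotProduct_add, h1, Matrix.smul_mulVec,
    dotProduct_smul, h2, smul_eq_mul]

theorem supMO_value_two_for_matrices :
    (∀ (n : ℕ) (x : Fin n → ℝ), 0 ≤ x ⬝ᵥ (Mmat n - (2 : ℝ) • Nmat n).mulVec x) ∧
    (∀ α : ℝ, 2 < α →
      ∃ (n : ℕ) (x : Fin n → ℝ), x ⬝ᵥ (Mmat n - α • Nmat n).mulVec x < 0) := by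
  constructor
  · intro n x
    rw [factor, ← Matrix.mulVec_mulVec, Matrix.dotProduct_mulVec, Matrix.vecMul_transpose]
    exact Finset.sum_nonneg fun i _ => mul_self_nonneg _
  · intro α hα
    obtain ⟨n₀, hn₀⟩ := pow_unbounded_of_one_lt (6/(α-2)) (by norm_num : (1:ℝ) < 2)
    set n := n₀ + 2 with hn
    refine ⟨n, (fun i : Fin n => (2:ℝ)^(n-1-(i:ℕ))), ?_⟩
    rw [quad]
    have hε : 0 < α - 2 := by linarith
    have h2n : (2:ℝ)^n₀ ≤ 2^n := pow_le_pow_right₀ (by norm_num) (by omega)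
    have h6 : 6 < (α-2) * 2^n := by
      have := (div_lt_iff₀ hε).mp (lt_of_lt_of_le hn₀ h2n)
      linarith
    have h4 : (4:ℝ) ≤ 2^n := by
      calc (4:ℝ) = 2^2 := by norm_num
      _ ≤ 2^n := pow_le_pow_right₀ (by norm_num) (by omega)
    have hnlt : (n:ℝ) < 2^n := by exact_mod_cast (Nat.lt_two_pow_self : n < 2 ^ n)
    have h44 : (4:ℝ)^n = ((2:ℝ)^n)^2 := by
      rw [show (4:ℝ) = 2^2 by norm_num, ← pow_mul, ← pow_mul, Nat.mul_comm]
    rw [h44]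
    have hp : ((α-2) * (2:ℝ)^n - 6) * ((2:ℝ)^n - 3) ≥ 0 :=
      mul_nonneg (by linarith) (by linarith)
    nlinarith [hp, hε, h6, h4, hnlt]
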